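/- For every integer n ≥ 3, ((n+2)/(n + 2^{−n−1}))·((n + 2^{n+2} + 3·2^{−n−1} − 4)/(n + 2^{n+2} + 2)) ≥ (1 + 1/n)·(1 − 1/2^{n−1}) ≥ 1. -/
import Mathlib

lemma pow_aux (n : ℕ) (hn : 3 ≤ n) : 2 * n + 2 ≤ 2 ^ n := by
  induction n, hn using Nat.le_induction with
  | base => norm_num
  | succ k hk ih => rw [pow_succ]; omega

/-- For every integer `n ≥ 3`,
    `((n+2)/(n+2^{-n-1})) · ((n+2^{n+2}+3·2^{-n-1}-4)/(n+2^{n+2}+2))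
       ≥ (1+1/n)(1-1/2^{n-1}) ≥ 1`. -/
theorem ratio_ge_one (n : ℕ) (hn : 3 ≤ n) :
    (((n : ℝ) + 2) / ((n : ℝ) + (2 : ℝ) ^ (-(n : ℤ) - 1))) *
        (((n : ℝ) + 2 ^ (n + 2) + 3 * (2 : ℝ) ^ (-(n : ℤ) - 1) - 4) /
          ((n : ℝ) + 2 ^ (n + 2) + 2))
      ≥ (1 + 1 / (n : ℝ)) * (1 - 1 / 2 ^ (n - 1)) ∧
    (1 + 1 / (n : ℝ)) * (1 - 1 / 2 ^ (n - 1)) ≥ 1 := by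
  have hx : (3:ℝ) ≤ (n:ℝ) := by exact_mod_cast hn
  have hp2 : 2 * (n:ℝ) + 2 ≤ (2:ℝ) ^ n := by exact_mod_cast pow_aux n hn
  set x : ℝ := (n:ℝ) with hxdef
  set p : ℝ := (2:ℝ) ^ n with hpdef
  have hp0 : (0:ℝ) < p := by positivity
  have hx0 : (0:ℝ) < x := by linarith
  have he : (2:ℝ) ^ (-(n:ℤ) - 1) = (2*p)⁻¹ := by
    rw [hpdef, show (-(n:ℤ)-1 : ℤ) = -((n+1:ℕ):ℤ) by push_cast; ring,
      zpow_neg, zpow_natCast, pow_succ]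
    ring_nf
  have h4 : (2:ℝ) ^ (n+2) = 4 * p := by rw [hpdef, pow_add]; ring
  have hhalf : (2:ℝ) ^ (n-1) = p / 2 := by
    have : (2:ℝ)^(n-1) * 2 = p := by rw [hpdef, ← pow_succ]; congr 1; omega
    linarith
  rw [he, h4, hhalf]
  constructor
  · rw [ge_iff_le, ← sub_nonneg]
    have hd1 : (0:ℝ) < x + (2*p)⁻¹ := by positivity
    have hd2 : (0:ℝ) < x + 4*p + 2 := by positivity
    have key : (x + 2) / (x + (2*p)⁻¹) * ((x + 4*p + 3*(2*p)⁻¹ - 4) / (x + 4*p + 2))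
        - (1 + 1/x) * (1 - 1/(p/2))
        = (2*p^2*x*(x+2)*(x+4*p-4) + 3*p*x*(x+2)
            - (x+1)*(p-2)*(2*p*x+1)*(x+4*p+2))
          / ((2*p*x+1)*(x+4*p+2)*x*p) := by
      field_simp
      ring
    rw [key]
    apply div_nonneg _ (by positivity)
    nlinarith [mul_pos hx0 hp0, sq_nonneg (p - 2*x - 2), sq_nonneg (x-3),
      mul_nonneg (sub_nonneg.2 hp2) (sub_nonneg.2 hx),
      mul_nonneg (mul_nonneg (sub_nonneg.2 hp2) (sub_nonneg.2 hx)) hp0.le,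
      mul_nonneg (mul_nonneg (sub_nonneg.2 hp2) hp0.le) hx0.le,
      mul_nonneg (mul_nonneg (sub_nonneg.2 hp2) hp0.le) hp0.le,
      mul_nonneg (mul_nonneg (sub_nonneg.2 hx) hp0.le) hp0.le,
      mul_nonneg (mul_nonneg (sub_nonneg.2 hx) hx0.le) hp0.le]
  · rw [ge_iff_le, ← sub_nonneg]
    have key : (1 + 1/x) * (1 - 1/(p/2)) - 1 = (p - 2*x - 2) / (x * p) := by
      field_simp
      ring
    rw [key]
    apply div_nonneg (by linarith) (by positivity)
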